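/- Let q = 2^m and k = 𝔽_q, and let f : k → k be the additive map f(x) = x¹⁶ + x. Then the quotient group k/f(k) has exactly 2^{gcd(m,4)} elements; in particular it has 2 elements if m is odd, 4 elements if m ≡ 2 (mod 4), and 16 elements if 4 divides m. -/

import Mathlib

open Polynomial

lemma two_pow_sub_one_modEq (a b : ℕ) :
    2 ^ b - 1 ≡ 2 ^ (b % a) - 1 [MOD 2 ^ a - 1] := by
  have h1 : (1 : ℕ) ≡ 2 ^ a [MOD 2 ^ a - 1] := by
    rw [Nat.modEq_iff_dvd' Nat.one_le_two_pow]
  have h2 : (2 : ℕ) ^ b ≡ 2 ^ (b % a) [MOD 2 ^ a - 1] := by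
    conv_lhs => rw [← Nat.div_add_mod b a]
    rw [pow_add, pow_mul]
    calc ((2 : ℕ) ^ a) ^ (b / a) * 2 ^ (b % a)
        ≡ 1 ^ (b / a) * 2 ^ (b % a) [MOD 2 ^ a - 1] :=
          Nat.ModEq.mul_right _ (Nat.ModEq.pow _ h1.symm)
      _ = 2 ^ (b % a) := by rw [one_pow, one_mul]
  apply Nat.ModEq.add_right_cancel' 1
  rwa [Nat.sub_add_cancel Nat.one_le_two_pow, Nat.sub_add_cancel Nat.one_le_two_pow]

lemma gcd_two_pow_sub_one (a b : ℕ) :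
    Nat.gcd (2 ^ a - 1) (2 ^ b - 1) = 2 ^ Nat.gcd a b - 1 := by
  induction a, b using Nat.gcd.induction with
  | H0 n => simp
  | H1 a b ha ih =>
    have hmod : (2 ^ b - 1) % (2 ^ a - 1) = (2 ^ (b % a) - 1) % (2 ^ a - 1) :=
      two_pow_sub_one_modEq a b
    calc Nat.gcd (2 ^ a - 1) (2 ^ b - 1)
        = Nat.gcd ((2 ^ b - 1) % (2 ^ a - 1)) (2 ^ a - 1) := Nat.gcd_rec _ _
      _ = Nat.gcd ((2 ^ (b % a) - 1) % (2 ^ a - 1)) (2 ^ a - 1) := by rw [hmod]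
      _ = Nat.gcd (2 ^ a - 1) (2 ^ (b % a) - 1) := (Nat.gcd_rec _ _).symm
      _ = Nat.gcd (2 ^ (b % a) - 1) (2 ^ a - 1) := Nat.gcd_comm _ _
      _ = 2 ^ Nat.gcd (b % a) a - 1 := ih
      _ = 2 ^ Nat.gcd a b - 1 := by rw [Nat.gcd_rec a b]

/-- The image of the additive map `f(x) = x¹⁶ + x` of a field of characteristic 2, as an
additive subgroup. -/
def Frange (k : Type*) [Field k] [CharP k 2] : AddSubgroup k where
  carrier := Set.range fun x : k => x ^ 16 + x
  zero_mem' := ⟨0, by norm_num⟩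
  add_mem' := by
    rintro _ _ ⟨x, rfl⟩ ⟨y, rfl⟩
    refine ⟨x + y, ?_⟩
    have h16 : (16 : ℕ) = 2 ^ 4 := by norm_num
    have hpow : (x + y) ^ 16 = x ^ 16 + y ^ 16 := by
      rw [h16]
      exact add_pow_char_pow x y 2 4
    show (x + y) ^ 16 + (x + y) = (x ^ 16 + x) + (y ^ 16 + y)
    rw [hpow]
    ring
  neg_mem' := by
    rintro _ ⟨x, rfl⟩
    refine ⟨x, ?_⟩
    have h2 : (2 : k) = 0 := by exact_mod_cast CharP.cast_eq_zero k 2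
    linear_combination (x ^ 16 + x) * h2

/-- Let `q = 2^m`, `k = 𝔽_q`, and let `f : k → k` be the additive map
`f(x) = x¹⁶ + x`.  Then the quotient group `k/f(k)` has exactly `2^gcd(m,4)` elements; in
particular it has 2 elements if `m` is odd, 4 elements if `m ≡ 2 (mod 4)`, and 16 elements
if `4 ∣ m`. -/
theorem card_quotient_frobenius_sixteen (m : ℕ) (hm : 0 < m)
    (k : Type*) [Field k] [Fintype k] [CharP k 2] (hcard : Fintype.card k = 2 ^ m) :
    Nat.card (k ⧸ Frange k) = 2 ^ Nat.gcd m 4 ∧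
    (Odd m → Nat.card (k ⧸ Frange k) = 2) ∧
    (m % 4 = 2 → Nat.card (k ⧸ Frange k) = 4) ∧
    (4 ∣ m → Nat.card (k ⧸ Frange k) = 16) := by
  classical
  -- the additive hom
  set φ : k →+ k := AddMonoidHom.mk' (fun x : k => x ^ 16 + x) (by
    intro x y
    have h16 : (16 : ℕ) = 2 ^ 4 := by norm_num
    have hpow : (x + y) ^ 16 = x ^ 16 + y ^ 16 := by
      rw [h16]; exact add_pow_char_pow x y 2 4
    simp only [hpow]; ring) with hφ
  have hrange : Frange k = φ.range := by
    ext x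
    simp only [Frange, AddSubgroup.mem_mk, Set.mem_range, AddMonoidHom.mem_range, hφ,
      AddMonoidHom.mk'_apply]
    exact Iff.rfl
  set g := Nat.gcd m 4 with hg
  have hg4 : g = Nat.gcd 4 m := Nat.gcd_comm _ _
  have hgpos : 0 < g := Nat.gcd_pos_of_pos_left _ hm
  set d := 2 ^ g - 1 with hdd
  have hdpos : 0 < d := by
    have : 2 ≤ 2 ^ g := by
      calc 2 = 2 ^ 1 := (pow_one 2).symm
      _ ≤ 2 ^ g := Nat.pow_le_pow_right (by norm_num) hgpos
    omega
  have hd : Nat.gcd 15 (2 ^ m - 1) = d := by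
    have := gcd_two_pow_sub_one 4 m
    norm_num at this
    rw [hdd, hg4]
    exact this
  have hd15 : d ∣ 15 := hd ▸ Nat.gcd_dvd_left _ _
  have hdq : d ∣ 2 ^ m - 1 := hd ▸ Nat.gcd_dvd_right _ _
  -- kernel description
  have hker : (φ.ker : Set k) = ↑(insert (0 : k) (nthRootsFinset d (1 : k))) := by
    ext x
    simp only [SetLike.mem_coe, AddMonoidHom.mem_ker, hφ, AddMonoidHom.mk'_apply,
      Finset.coe_insert, Set.mem_insert_iff, Finset.mem_coe,
      mem_nthRootsFinset hdpos]
    have hx16 : x ^ 16 + x = 0 ↔ x ^ 16 = x := by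
      rw [add_eq_zero_iff_eq_neg, CharTwo.neg_eq]
    rw [hx16]
    constructor
    · intro h
      rcases eq_or_ne x 0 with hx0 | hx0
      · exact Or.inl hx0
      · right
        have h15 : x ^ 15 = 1 := by
          have : x ^ 15 * x = 1 * x := by
            rw [one_mul, ← pow_succ]; exact h
          exact mul_right_cancel₀ hx0 this
        have hq : x ^ (2 ^ m - 1) = 1 := by
          have := FiniteField.pow_card_sub_one_eq_one x hx0
          rwa [hcard] at this
        have ho : orderOf x ∣ d := by
          rw [← hd]
          exact Nat.dvd_gcd (orderOf_dvd_of_pow_eq_one h15)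
            (orderOf_dvd_of_pow_eq_one hq)
        exact orderOf_dvd_iff_pow_eq_one.mp ho
    · rintro (rfl | h)
      · simp [zero_pow]
      · rcases eq_or_ne x 0 with rfl | hx0
        · simp [zero_pow, hdpos.ne'] at h
        · obtain ⟨t, ht⟩ := hd15
          have h15 : x ^ 15 = 1 := by
            rw [ht, pow_mul, h, one_pow]
          calc x ^ 16 = x ^ 15 * x := by rw [← pow_succ]
          _ = x := by rw [h15, one_mul]
  -- a primitive d-th root of unity
  have hqpos : 0 < 2 ^ m - 1 := by
    have : 2 ≤ 2 ^ m := by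
      calc 2 = 2 ^ 1 := (pow_one 2).symm
      _ ≤ 2 ^ m := Nat.pow_le_pow_right (by norm_num) hm
    omega
  obtain ⟨u, hu⟩ := IsCyclic.exists_generator (α := kˣ)
  have horder : orderOf u = 2 ^ m - 1 := by
    rw [orderOf_eq_card_of_forall_mem_zpowers hu, Nat.card_units,
      Nat.card_eq_fintype_card, hcard]
  have hprim : IsPrimitiveRoot ((u : k)) (2 ^ m - 1) := by
    rw [← horder]
    exact IsPrimitiveRoot.coe_units_iff.mpr (IsPrimitiveRoot.orderOf u)
  obtain ⟨t, ht⟩ := hdq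
  have hprimd : IsPrimitiveRoot ((u : k) ^ t) d :=
    hprim.pow hqpos (by rw [ht, mul_comm])
  have hcard_roots : (nthRootsFinset d (1 : k)).card = d := hprimd.card_nthRootsFinset
  have h0notmem : (0 : k) ∉ nthRootsFinset d (1 : k) := by
    intro h
    have := (mem_nthRootsFinset hdpos (1 : k)).mp h
    rw [zero_pow hdpos.ne'] at this
    exact zero_ne_one this
  -- cardinality of the kernel
  have hkercard : Nat.card φ.ker = 2 ^ g := by
    have : Nat.card φ.ker = Set.ncard (φ.ker : Set k) := (Nat.card_coe_set_eq _).symm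
    rw [this, hker, Set.ncard_coe_finset, Finset.card_insert_of_notMem h0notmem,
      hcard_roots]
    omega
  -- first isomorphism theorem bookkeeping
  have e1 : Nat.card k = Nat.card (k ⧸ Frange k) * Nat.card (Frange k) :=
    AddSubgroup.card_eq_card_quotient_mul_card_addSubgroup _
  have e2 : Nat.card k = Nat.card (k ⧸ φ.ker) * Nat.card φ.ker :=
    AddSubgroup.card_eq_card_quotient_mul_card_addSubgroup _
  have e3 : Nat.card (k ⧸ φ.ker) = Nat.card φ.range :=
    Nat.card_congr (QuotientAddGroup.quotientKerEquivRange φ).toEquiv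
  have hrc : Nat.card (Frange k) = Nat.card φ.range := by rw [hrange]
  have hkpos : Nat.card k = 2 ^ m := by
    rw [Nat.card_eq_fintype_card, hcard]
  have hFpos : Nat.card φ.range ≠ 0 := by
    intro h
    rw [e2, e3, h, zero_mul] at hkpos
    exact (by positivity : (0:ℕ) < 2 ^ m).ne' hkpos.symm
  have hmain : Nat.card (k ⧸ Frange k) = 2 ^ g := by
    have h1 : Nat.card (k ⧸ Frange k) * Nat.card φ.range = 2 ^ m := by
      rw [← hrc, ← e1, hkpos]
    have h2 : Nat.card φ.range * Nat.card φ.ker = 2 ^ m := by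
      rw [← e3, ← e2, hkpos]
    rw [hkercard] at h2
    have : Nat.card (k ⧸ Frange k) * Nat.card φ.range
        = 2 ^ g * Nat.card φ.range := by
      rw [h1, ← h2, mul_comm]
    exact Nat.eq_of_mul_eq_mul_right (Nat.pos_of_ne_zero hFpos) this
  refine ⟨hmain, ?_, ?_, ?_⟩
  · intro hodd
    have : g = 1 := (hodd.coprime_two_right.pow_right 2 : Nat.Coprime m (2 ^ 2))
    rw [hmain, this, pow_one]
  · intro h4
    have : g = 2 := by
      rw [hg, Nat.gcd_comm, Nat.gcd_rec, h4]
      norm_num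
    rw [hmain, this]
    norm_num
  · intro h4
    have : g = 4 := by
      rw [hg]
      exact Nat.gcd_eq_right h4
    rw [hmain, this]
    norm_num
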